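/- arXiv:1407.6806 — 3 statements merged into one kernel-verified Lean document; each statement's English description precedes it below -/
import Mathlib

section
/- Let μ : m → n be a crossed module of Lie algebras over a field K, let g := n/(im μ) with canonical projection π : n → g, and equip V := ker μ with the induced g-module structure (x·v := ρ(x)·v for any ρ(x) ∈ n with π(ρ(x)) = x; this is independent of the choice of lift). Let ρ : g → n be a linear section of π and let β : g × g → m be an alternating bilinear map with μ(β(x,y)) = [ρ(x),ρ(y)] − ρ([x,y]) for all x,y ∈ g (such β exists since im μ = ker π contains the right-hand side). Define D(x,y,z) := ρ(x)·β(y,z) − ρ(y)·β(x,z) + ρ(z)·β(x,y) − β([x,y],z) + β([x,z],y) − β([y,z],x). Then: (i) μ(D(x,y,z)) = 0 for all x,y,z ∈ g, so γ := D takes values in V = ker μ; and (ii) γ is a Chevalley–Eilenberg 3-cocycle of g with values in V, i.e. for all x₁,x₂,x₃,x₄ ∈ g: x₁·γ(x₂,x₃,x₄) − x₂·γ(x₁,x₃,x₄) + x₃·γ(x₁,x₂,x₄) − x₄·γ(x₁,x₂,x₃) − γ([x₁,x₂],x₃,x₄) + γ([x₁,x₃],x₂,x₄) − γ([x₁,x₄],x₂,x₃)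 − γ([x₂,x₃],x₁,x₄) + γ([x₂,x₄],x₁,x₃) − γ([x₃,x₄],x₁,x₂) = 0. -/
theorem jac3 {L : Type*} [LieRing L] (a b c : L) :
    ⁅⁅b,c⁆,a⁆ = ⁅⁅a,c⁆,b⁆ - ⁅⁅a,b⁆,c⁆ := by
  calc ⁅⁅b,c⁆,a⁆ = -⁅a,⁅b,c⁆⁆ := (lie_skew ⁅b,c⁆ a).symm ▸ rfl
    _ = -(⁅⁅a,b⁆,c⁆ + ⁅b,⁅a,c⁆⁆) := by rw [leibniz_lie]
    _ = -⁅⁅a,b⁆,c⁆ + ⁅⁅a,c⁆,b⁆ := by rw [neg_add, lie_skew ⁅a,c⁆ b]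
    _ = ⁅⁅a,c⁆,b⁆ - ⁅⁅a,b⁆,c⁆ := by abel

theorem tri3 {L : Type*} [LieRing L] (a b c : L) :
    ⁅c,⁅a,b⁆⁆ = ⁅b,⁅a,c⁆⁆ - ⁅a,⁅b,c⁆⁆ := by
  calc ⁅c,⁅a,b⁆⁆ = -⁅⁅a,b⁆,c⁆ := (lie_skew c ⁅a,b⁆).symm
    _ = -(⁅a,⁅b,c⁆⁆ - ⁅b,⁅a,c⁆⁆) := by rw [lie_lie]
    _ = ⁅b,⁅a,c⁆⁆ - ⁅a,⁅b,c⁆⁆ := by abel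

/-- Given a crossed module `μ : m → n` over `K`, with cokernel
`g` (presented by a surjective Lie algebra map `π : n → g` whose kernel is `im μ`),
a linear section `ρ` of `π`, and an alternating bilinear `β : g × g → m` with
`μ (β x y) = [ρ x, ρ y] − ρ [x,y]`, the cochain
`D(x,y,z) = ρ(x)·β(y,z) − ρ(y)·β(x,z) + ρ(z)·β(x,y) − β([x,y],z) + β([x,z],y) − β([y,z],x)`
takes values in `ker μ` and is a Chevalley–Eilenberg 3-cocycle of `g` with values in
`V = ker μ` (the `g`-action on values being given through the lift `ρ`). -/
theorem crossed_module_associated_three_cocycle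
    {K : Type*} [Field K] {m n g : Type*}
    [LieRing m] [LieAlgebra K m] [LieRing n] [LieAlgebra K n]
    [LieRing g] [LieAlgebra K g]
    (μ : m →ₗ⁅K⁆ n)
    (act : n →ₗ[K] m →ₗ[K] m)
    (h_der : ∀ (x : n) (a b : m), act x ⁅a, b⁆ = ⁅act x a, b⁆ + ⁅a, act x b⁆)
    (h_act : ∀ (x y : n) (a : m), act ⁅x, y⁆ a = act x (act y a) - act y (act x a))
    (h_equiv : ∀ (x : n) (a : m), μ (act x a) = ⁅x, μ a⁆)
    (h_peiffer : ∀ (a b : m), act (μ a) b = ⁅a, b⁆)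
    (π : n →ₗ⁅K⁆ g) (hπ_surj : Function.Surjective π)
    (hπ_ker : ∀ x : n, π x = 0 ↔ ∃ a : m, μ a = x)
    (ρ : g →ₗ[K] n) (hρ : ∀ x : g, π (ρ x) = x)
    (β : g →ₗ[K] g →ₗ[K] m) (hβ_alt : ∀ x : g, β x x = 0)
    (hβ : ∀ x y : g, μ (β x y) = ⁅ρ x, ρ y⁆ - ρ ⁅x, y⁆)
    (D : g → g → g → m)
    (hD : ∀ x y z : g, D x y z =
      act (ρ x) (β y z) - act (ρ y) (β x z) + act (ρ z) (β x y)
        - β ⁅x, y⁆ z + β ⁅x, z⁆ y - β ⁅y, z⁆ x) :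
    (∀ x y z : g, μ (D x y z) = 0) ∧
    (∀ x₁ x₂ x₃ x₄ : g,
      act (ρ x₁) (D x₂ x₃ x₄) - act (ρ x₂) (D x₁ x₃ x₄)
        + act (ρ x₃) (D x₁ x₂ x₄) - act (ρ x₄) (D x₁ x₂ x₃)
        - D ⁅x₁, x₂⁆ x₃ x₄ + D ⁅x₁, x₃⁆ x₂ x₄ - D ⁅x₁, x₄⁆ x₂ x₃
        - D ⁅x₂, x₃⁆ x₁ x₄ + D ⁅x₂, x₄⁆ x₁ x₃ - D ⁅x₃, x₄⁆ x₁ x₂ = 0) := by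
  have hβ' : ∀ a b : g, β b a = -β a b := by
    intro a b
    have h := hβ_alt (a + b)
    simp only [map_add, LinearMap.add_apply, hβ_alt] at h
    have h2 : β a b + β b a = 0 := by
      rw [← h]; abel
    exact eq_neg_of_add_eq_zero_right h2
  have hρμ : ∀ a b : g, ρ ⁅a,b⁆ = ⁅ρ a, ρ b⁆ - μ (β a b) := by
    intro a b; rw [hβ]; abel
  have L2 : ∀ (a b : g) (c : m), act (ρ ⁅a,b⁆) c
      = act (ρ a) (act (ρ b) c) - act (ρ b) (act (ρ a) c) - ⁅β a b, c⁆ := by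
    intro a b c
    rw [hρμ, map_sub, LinearMap.sub_apply, h_act, h_peiffer]
  constructor
  · intro x y z
    rw [hD]
    simp only [map_sub, map_add, h_equiv, hβ, lie_sub,
      jac3 x y z, tri3 (ρ x) (ρ y) (ρ z),
      ← lie_skew (ρ ⁅x,y⁆) (ρ z), ← lie_skew (ρ ⁅x,z⁆) (ρ y), ← lie_skew (ρ ⁅y,z⁆) (ρ x),
      map_sub, map_add]
    abel
  · intro x₁ x₂ x₃ x₄
    have s1 : β ⁅x₃,x₄⁆ ⁅x₁,x₂⁆ = -β ⁅x₁,x₂⁆ ⁅x₃,x₄⁆ := hβ' _ _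
    have s2 : β ⁅x₂,x₄⁆ ⁅x₁,x₃⁆ = -β ⁅x₁,x₃⁆ ⁅x₂,x₄⁆ := hβ' _ _
    have s3 : β ⁅x₂,x₃⁆ ⁅x₁,x₄⁆ = -β ⁅x₁,x₄⁆ ⁅x₂,x₃⁆ := hβ' _ _
    have t1 : ⁅β x₃ x₄, β x₁ x₂⁆ = -⁅β x₁ x₂, β x₃ x₄⁆ := by rw [← lie_skew]
    have t2 : ⁅β x₂ x₄, β x₁ x₃⁆ = -⁅β x₁ x₃, β x₂ x₄⁆ := by rw [← lie_skew]
    have t3 : ⁅β x₂ x₃, β x₁ x₄⁆ = -⁅β x₁ x₄, β x₂ x₃⁆ := by rw [← lie_skew]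
    simp only [hD, L2, jac3 x₁ x₂ x₃, jac3 x₁ x₂ x₄, jac3 x₁ x₃ x₄, jac3 x₂ x₃ x₄,
      s1, s2, s3, t1, t2, t3,
      map_sub, map_add, map_neg, LinearMap.sub_apply, LinearMap.add_apply,
      LinearMap.neg_apply, lie_sub, sub_lie, lie_add, add_lie, lie_neg, neg_lie]
    abel
end

section
/- Let g be a Lie algebra over a field K, let 0 → V₁ →(i) V₂ →(d) V₃ → 0 be a short exact sequence of g-modules (i injective, d surjective, both g-equivariant, ker d = im i), and let α : g × g → V₃ be an alternating bilinear 2-cocycle; let E := V₃ ×_α g be the associated abelian extension. Then the linear map μ : V₂ → E, μ(v) := (d(v), 0), together with the action of E on V₂ defined by (h,x)·v := x·v, is a crossed module of Lie algebras: V₂ with the zero bracket is a Lie algebra, μ is a Lie algebra homomorphism, (h,x)·v := x·v defines an action of the Lie algebra E on V₂ by derivations, μ((h,x)·v) = [(h,x), μ(v)] holds in E, and μ(v)·v' = [v,v'] = 0 for all v,v' ∈ V₂. Moreover ker μ = i(V₁) and the cokernel of μ is isomorphic to g, giving a four-term exact sequence 0 → V₁ → V₂ → E → g → 0. -/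
/-- Splicing a short exact sequence of `g`-modules
`0 → V₁ →(i) V₂ →(d) V₃ → 0` with the abelian extension `E = V₃ ×_α g` associated
to a 2-cocycle `α` yields a crossed module `μ : V₂ → E`, `μ v = (d v, 0)`, where
`V₂` carries the zero bracket (abelian Lie algebra) and `E` acts on `V₂` through
its `g`-component. The conclusions state: `μ` is linear and bracket-preserving,
the `E`-action is an action by derivations, the two crossed-module axioms hold,
`ker μ = i(V₁)`, and the cokernel of `μ` is `g` (four-term exact sequence
`0 → V₁ → V₂ → E → g → 0`). -/
theorem spliced_crossed_module
    {K g V₁ V₂ V₃ : Type*} [Field K] [LieRing g] [LieAlgebra K g]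
    [AddCommGroup V₁] [Module K V₁] [LieRingModule g V₁] [LieModule K g V₁]
    [AddCommGroup V₂] [Module K V₂] [LieRingModule g V₂] [LieModule K g V₂]
    [AddCommGroup V₃] [Module K V₃] [LieRingModule g V₃] [LieModule K g V₃]
    (i : V₁ →ₗ[K] V₂) (d : V₂ →ₗ[K] V₃)
    (hi_inj : Function.Injective i) (hd_surj : Function.Surjective d)
    (hi_equiv : ∀ (x : g) (u : V₁), i ⁅x, u⁆ = ⁅x, i u⁆)
    (hd_equiv : ∀ (x : g) (v : V₂), d ⁅x, v⁆ = ⁅x, d v⁆)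
    (h_exact : ∀ v : V₂, d v = 0 ↔ ∃ u : V₁, i u = v)
    (α : g →ₗ[K] g →ₗ[K] V₃)
    (hα_alt : ∀ x : g, α x x = 0)
    (hα_coc : ∀ x y z : g,
      ⁅x, α y z⁆ - ⁅y, α x z⁆ + ⁅z, α x y⁆
        - α ⁅x, y⁆ z + α ⁅x, z⁆ y - α ⁅y, z⁆ x = 0)
    (brE : V₃ × g → V₃ × g → V₃ × g)
    (hbrE : ∀ p q : V₃ × g,
      brE p q = (⁅p.2, q.1⁆ - ⁅q.2, p.1⁆ + α p.2 q.2, ⁅p.2, q.2⁆))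
    (brV : V₂ → V₂ → V₂) (hbrV : ∀ v v' : V₂, brV v v' = 0)
    (μ : V₂ → V₃ × g) (hμ : ∀ v : V₂, μ v = (d v, 0)) :
    (∀ v v' : V₂, μ (v + v') = μ v + μ v') ∧
    (∀ (c : K) (v : V₂), μ (c • v) = c • μ v) ∧
    (∀ v v' : V₂, brE (μ v) (μ v') = μ (brV v v')) ∧
    (∀ (e : V₃ × g) (v v' : V₂),
      ⁅e.2, brV v v'⁆ = brV ⁅e.2, v⁆ v' + brV v ⁅e.2, v'⁆) ∧
    (∀ (e e' : V₃ × g) (v : V₂),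
      ⁅(brE e e').2, v⁆ = ⁅e.2, ⁅e'.2, v⁆⁆ - ⁅e'.2, ⁅e.2, v⁆⁆) ∧
    (∀ (e : V₃ × g) (v : V₂), μ ⁅e.2, v⁆ = brE e (μ v)) ∧
    (∀ v v' : V₂, ⁅(μ v).2, v'⁆ = brV v v') ∧
    (∀ v : V₂, μ v = 0 ↔ ∃ u : V₁, i u = v) ∧
    (Function.Surjective (fun e : V₃ × g => e.2)) ∧
    (∀ e : V₃ × g, e.2 = 0 ↔ ∃ v : V₂, μ v = e) := by
  refine ⟨?_, ?_, ?_, ?_, ?_, ?_, ?_, ?_, ?_, ?_⟩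
  · intro v v'; simp [hμ, Prod.ext_iff]
  · intro c v; simp [hμ, Prod.ext_iff]
  · intro v v'; simp [hμ, hbrE, hbrV]
  · intro e v v'; simp [hbrV]
  · intro e e' v; simp [hbrE, lie_lie]
  · intro e v; simp [hμ, hbrE, hd_equiv]
  · intro v v'; simp [hμ, hbrV]
  · intro v
    rw [hμ, ← h_exact]
    simp [Prod.ext_iff]
  · intro x; exact ⟨(0, x), rfl⟩
  · intro e
    constructor
    · intro h2
      obtain ⟨v, hv⟩ := hd_surj e.1
      exact ⟨v, by rw [hμ, hv, ← h2]⟩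
    · rintro ⟨v, rfl⟩; rw [hμ]
end

section
/- Let ĝ be a Lie algebra over a field K, l ⊆ ĝ a Lie ideal, z a ĝ-module on which l acts trivially, ω : l × l → z an alternating bilinear 2-cocycle of l with values in the trivial l-module z, and l̂ := z ⊕_ω l the central extension with bracket [(z₁,l₁),(z₂,l₂)] = (ω(l₁,l₂),[l₁,l₂]). Let θ : ĝ → Hom_K(l,z) be a linear map, written θ(x,l) := θₓ(l), such that for every x ∈ ĝ the map ζ(x) : (z,l) ↦ (x·z + θₓ(l), [x,l]) is a derivation of l̂. Then the assignment x·(z,l) := (x·z + θₓ(l), [x,l]) defines a representation of ĝ on l̂, i.e. [x,x']·(z,l) = x·(x'·(z,l)) − x'·(x·(z,l)) for all x,x' ∈ ĝ and (z,l) ∈ l̂, if and only if for all x, x' ∈ ĝ and l ∈ l: x·θ(x',l) − x'·θ(x,l) − θ([x,x'],l) + θ(x,[x',l]) + θ(x',[l,x]) = 0. -/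
/-- Setup as in Statement 6, with a linear map
`θ : ghat → Hom(l,z)` such that every `ζ(x) : (z,l) ↦ (x·z + θ x l, [x,l])` is a
derivation of the central extension `lhat = z ⊕_ω l`. Then
`x·(z,l) := (x·z + θ x l, [x,l])` defines a representation of `ghat` on `lhat`
(i.e. `[x,x']·p = x·(x'·p) − x'·(x·p)` for all `p`) if and only if `θ` is a
1-cocycle: `x·θ(x',l) − x'·θ(x,l) − θ([x,x'],l) + θ(x,[x',l]) + θ(x',[l,x]) = 0`
for all `x, x' ∈ ghat`, `l ∈ l` (here `[l,x] = −[x,l]`). -/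
theorem representation_condition_on_theta
    {K ghat z : Type*} [Field K] [LieRing ghat] [LieAlgebra K ghat]
    [AddCommGroup z] [Module K z] [LieRingModule ghat z] [LieModule K ghat z]
    (l : LieIdeal K ghat)
    (h_triv : ∀ (a : l) (v : z), ⁅(a : ghat), v⁆ = 0)
    (ω : l →ₗ[K] l →ₗ[K] z)
    (hω_alt : ∀ a : l, ω a a = 0)
    (hω_coc : ∀ a b c : l,
      ω ⁅(a : ghat), b⁆ c + ω ⁅(b : ghat), c⁆ a + ω ⁅(c : ghat), a⁆ b = 0)
    (θ : ghat →ₗ[K] l →ₗ[K] z)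
    (br : z × l → z × l → z × l)
    (hbr : ∀ p q : z × l, br p q = (ω p.2 q.2, ⁅((p.2 : l) : ghat), q.2⁆))
    (actE : ghat → z × l → z × l)
    (hactE : ∀ (x : ghat) (p : z × l), actE x p = (⁅x, p.1⁆ + θ x p.2, ⁅x, p.2⁆))
    (h_der : ∀ (x : ghat) (p q : z × l),
      actE x (br p q) = br (actE x p) q + br p (actE x q)) :
    (∀ (x x' : ghat) (p : z × l),
      actE ⁅x, x'⁆ p = actE x (actE x' p) - actE x' (actE x p)) ↔
    (∀ (x x' : ghat) (a : l),
      ⁅x, θ x' a⁆ - ⁅x', θ x a⁆ - θ ⁅x, x'⁆ a + θ x ⁅x', a⁆ + θ x' (-⁅x, a⁆) = 0) := by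
  constructor
  · intro h x x' a
    have := h x x' (0, a)
    simp only [hactE] at this
    have h1 := congrArg Prod.fst this
    simp only [Prod.fst_sub, lie_zero, zero_add, map_neg] at h1
    -- h1 : θ ⁅x,x'⁆ a = (⁅x, θ x' a⁆ + θ x ⁅x',a⁆) - (⁅x', θ x a⁆ + θ x' ⁅x,a⁆)
    rw [map_neg]
    linear_combination (norm := abel) -h1
  · intro h x x' p
    rw [hactE, hactE, hactE, hactE, hactE]
    have hc := h x x' p.2
    rw [map_neg] at hc
    ext
    · show ⁅⁅x, x'⁆, p.1⁆ + θ ⁅x, x'⁆ p.2 =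
        (⁅x, ⁅x', p.1⁆ + θ x' p.2⁆ + θ x ⁅x', p.2⁆) - (⁅x', ⁅x, p.1⁆ + θ x p.2⁆ + θ x' ⁅x, p.2⁆)
      rw [lie_lie, lie_add, lie_add]
      linear_combination (norm := abel) -hc
    · exact congrArg Subtype.val (lie_lie x x' p.2)
end
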